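/- arXiv:math/0404476 — 3 statements merged into one kernel-verified Lean document; each statement's English description precedes it below -/
import Mathlib

section
/- Let x₁, …, x_l ∈ ℤ^n be vectors such that ℤx₁ + ⋯ + ℤx_l = ℤ^n and a₁x₁ + ⋯ + a_l x_l = 0 for positive integers a₁, …, a_l with gcd(a₁, …, a_l) = 1. Then l ≥ n + 1, and if l = n + 1, any n of the vectors x₁, …, x_{n+1} are linearly independent over ℚ. -/
section aux

variable {n l : ℕ}

private lemma spanQ_top (x : Fin l → (Fin n → ℤ))
    (hspan : Submodule.span ℤ (Set.range x) = (⊤ : Submodule ℤ (Fin n → ℤ))) :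
    Submodule.span ℚ (Set.range fun i => (fun j => (x i j : ℚ) : Fin n → ℚ)) = ⊤ := by
  set y : Fin l → (Fin n → ℚ) := fun i => (fun j => (x i j : ℚ)) with hy
  rw [eq_top_iff, ← (Pi.basisFun ℚ (Fin n)).span_eq, Submodule.span_le]
  rintro v ⟨j, rfl⟩
  have hmem : (Pi.single j 1 : Fin n → ℤ) ∈ Submodule.span ℤ (Set.range x) := by
    rw [hspan]; trivial
  obtain ⟨c, hc⟩ := (Submodule.mem_span_range_iff_exists_fun ℤ).1 hmem
  have : ∑ i, (c i : ℚ) • y i = Pi.basisFun ℚ (Fin n) j := by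
    funext k
    have := congrFun hc k
    simp only [Finset.sum_apply, Pi.smul_apply, smul_eq_mul] at this ⊢
    simp only [Pi.basisFun_apply, hy, Pi.single_apply] at this ⊢
    exact_mod_cast this
  rw [← this]
  exact Submodule.sum_mem _ fun i _ => Submodule.smul_mem _ _
    (Submodule.subset_span ⟨i, rfl⟩)

private lemma spanQ_compl_top (x : Fin l → (Fin n → ℤ))
    (hspan : Submodule.span ℤ (Set.range x) = (⊤ : Submodule ℤ (Fin n → ℤ)))
    (a : Fin l → ℤ) (ha : ∀ i, 0 < a i)
    (hrel : ∑ i, a i • x i = 0) (i₀ : Fin l) :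
    Submodule.span ℚ (Set.range fun i : {i : Fin l // i ≠ i₀} =>
      (fun j => (x i.val j : ℚ) : Fin n → ℚ)) = ⊤ := by
  set y : Fin l → (Fin n → ℚ) := fun i => (fun j => (x i j : ℚ)) with hy
  set S : Submodule ℚ (Fin n → ℚ) :=
    Submodule.span ℚ (Set.range fun i : {i : Fin l // i ≠ i₀} => y i.val) with hS
  have hrelQ : ∑ i, (a i : ℚ) • y i = 0 := by
    funext k
    have := congrFun hrel k
    simp only [Finset.sum_apply, Pi.smul_apply, smul_eq_mul, Pi.zero_apply] at this ⊢
    simp only [hy]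
    exact_mod_cast this
  have hmem : ∀ i, y i ∈ S := by
    intro i
    by_cases hi : i = i₀
    · subst hi
      have hsplit : (a i : ℚ) • y i = -∑ i' ∈ Finset.univ.erase i, (a i' : ℚ) • y i' := by
        have h2 := (Finset.add_sum_erase Finset.univ (fun i' => (a i' : ℚ) • y i')
          (Finset.mem_univ i)).trans hrelQ
        exact eq_neg_of_add_eq_zero_left h2
      have hne : (a i : ℚ) ≠ 0 := by exact_mod_cast (ha i).ne'
      have : y i = (a i : ℚ)⁻¹ • ((a i : ℚ) • y i) := by
        rw [smul_smul, inv_mul_cancel₀ hne, one_smul]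
      rw [this, hsplit]
      refine Submodule.smul_mem _ _ (Submodule.neg_mem _ (Submodule.sum_mem _ ?_))
      intro i' hi'
      exact Submodule.smul_mem _ _
        (Submodule.subset_span ⟨⟨i', (Finset.mem_erase.1 hi').1⟩, rfl⟩)
    · exact Submodule.subset_span ⟨⟨i, hi⟩, rfl⟩
  have htop := spanQ_top x hspan
  rw [eq_top_iff, ← htop, Submodule.span_le]
  rintro v ⟨i, rfl⟩
  exact hmem i

end aux

/-- if `x₁, …, x_l ∈ ℤ^n` generate `ℤ^n` as a group and satisfy
`a₁x₁ + ⋯ + a_l x_l = 0` with `aᵢ ∈ ℤ_{>0}` and `gcd(a₁,…,a_l) = 1`, then `l ≥ n + 1`,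
and when `l = n + 1` every `n`-element subset of the `xᵢ` (i.e. the complement of any
single index) is linearly independent over `ℚ`. -/
theorem stmt5 {n l : ℕ} (x : Fin l → (Fin n → ℤ))
    (hspan : Submodule.span ℤ (Set.range x) = (⊤ : Submodule ℤ (Fin n → ℤ)))
    (a : Fin l → ℤ) (ha : ∀ i, 0 < a i)
    (hgcd : Finset.univ.gcd a = 1)
    (hrel : ∑ i, a i • x i = 0) :
    n + 1 ≤ l ∧
    (l = n + 1 → ∀ i₀ : Fin l,
      LinearIndependent ℚ (fun i : {i : Fin l // i ≠ i₀} =>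
        (fun j => (x i.val j : ℚ) : Fin n → ℚ))) := by
  have hl : 0 < l := by
    rcases Nat.eq_zero_or_pos l with h | h
    · exfalso
      subst h
      simp [Finset.univ_eq_empty] at hgcd
    · exact h
  have i₀ : Fin l := ⟨0, hl⟩
  have hcard : Fintype.card {i : Fin l // i ≠ i₀} = l - 1 := by
    simp [Fintype.card_subtype_compl, Fintype.card_subtype_eq]
  have hfr : Module.finrank ℚ (Fin n → ℚ) = n := by simp [Module.finrank_pi]
  constructor
  · have := finrank_le_of_span_eq_top (spanQ_compl_top x hspan a ha hrel i₀)
    rw [hfr, hcard] at this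
    omega
  · intro hln i₁
    have hcard1 : Fintype.card {i : Fin l // i ≠ i₁} = n := by
      simp [Fintype.card_subtype_compl, Fintype.card_subtype_eq, hln]
    exact linearIndependent_of_top_le_span_of_card_eq_finrank
      (le_of_eq (spanQ_compl_top x hspan a ha hrel i₁).symm)
      (by rw [hcard1, hfr])
end

section
/- Let x₁, …, x_{n+1} ∈ ℤ^n satisfy a₁x₁ + ⋯ + a_{n+1}x_{n+1} = 0 with all aᵢ positive integers, and suppose any n of the xᵢ are linearly independent over ℚ. Then the n+1 cones σᵢ = Σ_{j ≠ i} ℝ_{≥0} x_j (for i = 1, …, n+1) cover ℝ^n, i.e., every point of ℝ^n lies in some σᵢ. -/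
/-- if `x₁, …, x_{n+1} ∈ ℤ^n` satisfy `a₁x₁ + ⋯ + a_{n+1}x_{n+1} = 0` with
all `aᵢ` positive integers and every `n` of the `xᵢ` are linearly independent over `ℚ`,
then the `n+1` cones `σᵢ = Σ_{j≠i} ℝ_{≥0} x_j` cover `ℝ^n`. -/
theorem stmt6 {n : ℕ} (x : Fin (n + 1) → (Fin n → ℤ))
    (a : Fin (n + 1) → ℤ) (ha : ∀ i, 0 < a i)
    (hrel : ∑ i, a i • x i = 0)
    (hindep : ∀ i₀ : Fin (n + 1),
      LinearIndependent ℚ (fun i : {i : Fin (n + 1) // i ≠ i₀} =>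
        (fun j => (x i.val j : ℚ) : Fin n → ℚ))) :
    ∀ p : Fin n → ℝ, ∃ i₀ : Fin (n + 1), ∃ t : Fin (n + 1) → ℝ,
      (∀ j, 0 ≤ t j) ∧ t i₀ = 0 ∧ p = ∑ j, t j • (fun k => (x j k : ℝ)) := by
  intro p
  set y : Fin (n + 1) → (Fin n → ℝ) := fun i => fun k => (x i k : ℝ) with hy
  -- real relation
  have hrelR : ∑ i, (a i : ℝ) • y i = 0 := by
    funext k
    have h0 := congrFun hrel k
    simp only [Finset.sum_apply, Pi.smul_apply, smul_eq_mul, Pi.zero_apply] at h0 ⊢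
    simp only [hy]
    exact_mod_cast h0
  -- choose i₀ = last; the other rows form an invertible matrix over ℚ hence over ℝ
  set i₀ : Fin (n + 1) := Fin.last n with hi₀
  set Aq : Matrix (Fin n) (Fin n) ℚ := fun r c => (x (i₀.succAbove r) c : ℚ) with hAq
  have hli : LinearIndependent ℚ (fun r : Fin n => Aq r) := by
    have := (hindep i₀).comp
      (fun r : Fin n => (⟨i₀.succAbove r, Fin.succAbove_ne i₀ r⟩ : {i : Fin (n+1) // i ≠ i₀}))
      (fun r s hrs => Fin.succAbove_right_injective (p := i₀) (by simpa using hrs))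
    exact this
  have hdq : IsUnit Aq.det :=
    (Matrix.isUnit_iff_isUnit_det Aq).1 (Matrix.linearIndependent_rows_iff_isUnit.1 hli)
  set Ar : Matrix (Fin n) (Fin n) ℝ := Aq.map (algebraMap ℚ ℝ) with hAr
  have hdr : IsUnit Ar := by
    rw [Matrix.isUnit_iff_isUnit_det, hAr, ← RingHom.mapMatrix_apply, ← RingHom.map_det]
    refine isUnit_iff_ne_zero.2 ?_
    have := isUnit_iff_ne_zero.1 hdq
    simpa using this
  obtain ⟨c, hc⟩ := (Matrix.vecMul_surjective_iff_isUnit.2 hdr) p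
  -- p = ∑ r, c r • y (succAbove r)
  have hp : p = ∑ r, c r • y (i₀.succAbove r) := by
    funext k
    have := congrFun hc k
    simp only [Matrix.vecMul, dotProduct, hAr, hAq, Matrix.map_apply] at this
    simp only [Finset.sum_apply, Pi.smul_apply, smul_eq_mul, hy]
    rw [← this]
    norm_num
    simp [Matrix.map, Matrix.of_apply]
  set c' : Fin (n + 1) → ℝ := i₀.insertNth 0 c with hc'
  have hpc' : p = ∑ i, c' i • y i := by
    rw [Fin.sum_univ_succAbove (fun i => c' i • y i) i₀]
    simp [hc', hp]
  obtain ⟨m, _, hm⟩ := Finset.exists_min_image Finset.univ (fun i => c' i / (a i : ℝ))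
    ⟨i₀, Finset.mem_univ _⟩
  set lam : ℝ := c' m / (a m : ℝ) with hlam
  refine ⟨m, fun i => c' i - lam * (a i : ℝ), ?_, ?_, ?_⟩
  · intro j
    have hj : lam ≤ c' j / (a j : ℝ) := hm j (Finset.mem_univ _)
    have haj : (0 : ℝ) < (a j : ℝ) := by exact_mod_cast ha j
    have := (le_div_iff₀ haj).1 hj
    show 0 ≤ c' j - lam * (a j : ℝ)
    linarith
  · have ham : ((a m : ℝ)) ≠ 0 := by
      have : (0 : ℝ) < (a m : ℝ) := by exact_mod_cast ha m
      linarith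
    show c' m - lam * (a m : ℝ) = 0
    rw [hlam, div_mul_cancel₀ _ ham, sub_self]
  · have hsum : ∑ j, (c' j - lam * (a j : ℝ)) • y j
        = (∑ j, c' j • y j) - lam • ∑ j, (a j : ℝ) • y j := by
      rw [Finset.smul_sum, ← Finset.sum_sub_distrib]
      exact Finset.sum_congr rfl fun j _ => by rw [sub_smul, smul_smul]
    rw [hsum, hrelR, smul_zero, sub_zero, ← hpc']
end

section
/- Let x₁, …, x_{n+1} ∈ ℤ^n satisfy a₁x₁ + ⋯ + a_{n+1}x_{n+1} = 0 with all aᵢ positive integers, and suppose any n of the xᵢ are linearly independent over ℚ. Then for i ≠ j, the intersection σᵢ ∩ σⱼ equals the cone generated by {x_k : k ≠ i, k ≠ j}, where σᵢ = Σ_{k ≠ i} ℝ_{≥0} x_k. -/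
/-- The cone of nonnegative real combinations of the vectors `x j` for `j` in `S`. -/
def coneOn {n m : ℕ} (x : Fin m → (Fin n → ℤ)) (S : Set (Fin m)) : Set (Fin n → ℝ) :=
  {p | ∃ t : Fin m → ℝ, (∀ k, 0 ≤ t k) ∧ (∀ k ∉ S, t k = 0) ∧
    p = ∑ k, t k • (fun j => (x k j : ℝ))}



open Finset

/-- Equiv between `Fin n` and the complement of `i₀` in `Fin (n+1)`. -/
noncomputable def succAboveEquiv {n : ℕ} (i₀ : Fin (n + 1)) :
    Fin n ≃ {i : Fin (n + 1) // i ≠ i₀} :=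
  Equiv.ofBijective (fun p => ⟨i₀.succAbove p, Fin.succAbove_ne i₀ p⟩)
    ⟨fun p q h => Fin.succAbove_right_injective (congrArg Subtype.val h),
     fun ⟨y, hy⟩ => by
       obtain ⟨p, hp⟩ := Fin.exists_succAbove_eq hy
       exact ⟨p, Subtype.ext hp⟩⟩

lemma real_indep {n : ℕ} (x : Fin (n + 1) → (Fin n → ℤ)) (i₀ : Fin (n + 1))
    (h : LinearIndependent ℚ (fun i : {i : Fin (n + 1) // i ≠ i₀} =>
        (fun j => (x i.val j : ℚ) : Fin n → ℚ))) :
    LinearIndependent ℝ (fun i : {i : Fin (n + 1) // i ≠ i₀} =>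
        (fun j => (x i.val j : ℝ) : Fin n → ℝ)) := by
  set e := succAboveEquiv i₀
  have hQ : LinearIndependent ℚ (fun p : Fin n =>
      (fun j => (x (e p).val j : ℚ) : Fin n → ℚ)) :=
    h.comp e e.injective
  set M : Matrix (Fin n) (Fin n) ℚ := fun p j => (x (e p).val j : ℚ) with hM
  have hU : IsUnit M := Matrix.linearIndependent_rows_iff_isUnit.mp hQ
  have hdet : M.det ≠ 0 := by
    intro h0
    exact (Matrix.isUnit_iff_isUnit_det M).mp hU |>.ne_zero h0
  set MR : Matrix (Fin n) (Fin n) ℝ := M.map (Rat.cast) with hMR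
  have hdetR : MR.det ≠ 0 := by
    have : MR.det = ((M.det : ℚ) : ℝ) := (RingHom.map_det (algebraMap ℚ ℝ) M).symm
    rw [this]
    exact_mod_cast hdet
  have hUR : IsUnit MR := (Matrix.isUnit_iff_isUnit_det MR).mpr hdetR.isUnit
  have hR : LinearIndependent ℝ (fun p : Fin n => MR p) :=
    Matrix.linearIndependent_rows_iff_isUnit.mpr hUR
  have hR' : LinearIndependent ℝ (fun p : Fin n =>
      (fun j => (x (e p).val j : ℝ) : Fin n → ℝ)) := hR
  have := hR'.comp e.symm e.symm.injective
  convert this using 2 with i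
  simp

lemma ker_zero {n : ℕ} (x : Fin (n + 1) → (Fin n → ℤ)) (i₀ : Fin (n + 1))
    (h : LinearIndependent ℝ (fun i : {i : Fin (n + 1) // i ≠ i₀} =>
        (fun j => (x i.val j : ℝ) : Fin n → ℝ)))
    (c : Fin (n + 1) → ℝ) (hc0 : c i₀ = 0)
    (hsum : ∑ k, c k • (fun j => (x k j : ℝ)) = 0) : ∀ k, c k = 0 := by
  have key : ∀ i : {i : Fin (n + 1) // i ≠ i₀}, c i.val = 0 := by
    apply Fintype.linearIndependent_iff.mp h (fun i => c i.val)
    have hs : ∑ i : {i : Fin (n + 1) // i ≠ i₀},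
        c i.val • (fun j => (x i.val j : ℝ)) =
        ∑ k ∈ Finset.univ.erase i₀, c k • (fun j => (x k j : ℝ)) :=
      (Finset.sum_subtype (Finset.univ.erase i₀) (fun x => by simp)
        (fun k => c k • (fun j => (x k j : ℝ)))).symm
    rw [hs]
    rw [← Finset.add_sum_erase Finset.univ _ (Finset.mem_univ i₀)] at hsum
    simpa [hc0] using hsum
  intro k
  by_cases hk : k = i₀
  · rw [hk]; exact hc0
  · exact key ⟨k, hk⟩

/-- with `x₁, …, x_{n+1} ∈ ℤ^n` satisfying a positive relation
`a₁x₁ + ⋯ + a_{n+1}x_{n+1} = 0` and any `n` of the `xᵢ` linearly independent over `ℚ`,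
for `i ≠ j` the intersection `σᵢ ∩ σⱼ` of the cones `σᵢ = Σ_{k≠i} ℝ_{≥0}x_k` equals the
cone generated by `{x_k : k ≠ i, k ≠ j}`. -/
theorem stmt7 {n : ℕ} (x : Fin (n + 1) → (Fin n → ℤ))
    (a : Fin (n + 1) → ℤ) (ha : ∀ i, 0 < a i)
    (hrel : ∑ i, a i • x i = 0)
    (hindep : ∀ i₀ : Fin (n + 1),
      LinearIndependent ℚ (fun i : {i : Fin (n + 1) // i ≠ i₀} =>
        (fun j => (x i.val j : ℚ) : Fin n → ℚ))) :
    ∀ i j : Fin (n + 1), i ≠ j →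
      coneOn x {k | k ≠ i} ∩ coneOn x {k | k ≠ j} = coneOn x {k | k ≠ i ∧ k ≠ j} := by
  intro i j hij
  have hrelR : ∀ j', ∑ k, (a k : ℝ) * (x k j' : ℝ) = 0 := by
    intro j'
    have h0 := congrArg (fun v : Fin n → ℤ => v j') hrel
    simp only [Finset.sum_apply, Pi.smul_apply, smul_eq_mul, Pi.zero_apply] at h0
    exact_mod_cast h0
  ext p
  constructor
  · rintro ⟨⟨s, hs0, hsi, hps⟩, ⟨t, ht0, htj, hpt⟩⟩
    have hsi' : s i = 0 := hsi i (by simp)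
    have htj' : t j = 0 := htj j (by simp)
    have hai : (0:ℝ) < (a i : ℝ) := by exact_mod_cast ha i
    have haj : (0:ℝ) < (a j : ℝ) := by exact_mod_cast ha j
    set r : ℝ := - t i / (a i : ℝ) with hr
    set c : Fin (n + 1) → ℝ := fun k => s k - t k - r * (a k : ℝ) with hcdef
    have hci : c i = 0 := by
      simp only [hcdef, hr, hsi']
      field_simp
      ring
    have h1 : ∀ j', p j' = ∑ k, s k * (x k j' : ℝ) := by
      intro j'
      rw [hps]
      simp [Finset.sum_apply]
    have h2 : ∀ j', p j' = ∑ k, t k * (x k j' : ℝ) := by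
      intro j'
      rw [hpt]
      simp [Finset.sum_apply]
    have hc : ∀ k, c k = 0 := by
      apply ker_zero x i (real_indep x i (hindep i)) c hci
      funext j'
      simp only [Finset.sum_apply, Pi.smul_apply, smul_eq_mul, Pi.zero_apply]
      have expand : ∑ k, c k * (x k j' : ℝ) =
          (∑ k, s k * (x k j' : ℝ)) - (∑ k, t k * (x k j' : ℝ))
            - r * ∑ k, (a k : ℝ) * (x k j' : ℝ) := by
        rw [Finset.mul_sum, ← Finset.sum_sub_distrib, ← Finset.sum_sub_distrib]
        apply Finset.sum_congr rfl
        intro k _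
        simp only [hcdef]
        ring
      rw [expand, ← h1 j', ← h2 j', hrelR j']
      ring
    have hr_nonpos : r ≤ 0 := by
      apply div_nonpos_of_nonpos_of_nonneg
      · linarith [ht0 i]
      · linarith
    have hsj : s j = r * (a j : ℝ) := by
      have := hc j
      simp only [hcdef, htj'] at this
      linarith
    have hr0 : r = 0 := by
      have h3 : r * (a j : ℝ) ≤ 0 := mul_nonpos_of_nonpos_of_nonneg hr_nonpos haj.le
      have h4 : 0 ≤ r * (a j : ℝ) := hsj ▸ hs0 j
      have h5 : r * (a j : ℝ) = 0 := le_antisymm h3 h4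
      exact (mul_eq_zero.mp h5).resolve_right haj.ne'
    have hst : ∀ k, s k = t k := by
      intro k
      have := hc k
      simp only [hcdef, hr0, zero_mul] at this
      linarith
    refine ⟨s, hs0, ?_, hps⟩
    intro k hk
    simp only [Set.mem_setOf_eq, not_and_or, not_not] at hk
    rcases hk with rfl | rfl
    · exact hsi'
    · rw [hst k, htj']
  · rintro ⟨t, ht0, htS, hpt⟩
    constructor
    · exact ⟨t, ht0, fun k hk => htS k (by simp_all [Set.mem_setOf_eq]), hpt⟩
    · exact ⟨t, ht0, fun k hk => htS k (by simp_all [Set.mem_setOf_eq]), hpt⟩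
end
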